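/- arXiv:math/9911057 — 2 statements merged into one kernel-verified Lean document; each statement's English description precedes it below -/
import Mathlib

section
/- Let R be a commutative ring, I ⊆ R an ideal, and E ⊆ R^k a submodule such that every (l+1)×(l+1) minor of any matrix formed from l+1 elements of E lies in I, where l is the dimension of the image E(0) of E under evaluation at 0 (i.e., under the quotient map R → R/m for the maximal ideal m of formal power series vanishing at 0, with R = the formal power series ring). If v_1,…,v_l ∈ E are such that v_1(0),…,v_l(0) form a basis of E(0), then every e ∈ E can be written as e = a_1 v_1 + ⋯ + a_l v_l + e′ with a_j ∈ R and every component of e′ in I. -/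
noncomputable section

lemma exists_cols {l k : ℕ} (A : Matrix (Fin l) (Fin k) ℂ)
    (h : LinearIndependent ℂ (fun i => A i)) :
    ∃ c : Fin l → Fin k, (A.submatrix id c).det ≠ 0 := by
  classical
  have hrk : A.rank = l := by simpa using h.rank_matrix
  have hspan : Submodule.span ℂ (Set.range A.transpose) = ⊤ := by
    apply Submodule.eq_top_of_finrank_eq
    rw [show Set.range A.transpose = Set.range A.col from rfl, ← A.rank_eq_finrank_span_cols, hrk, Module.finrank_fintype_fun_eq_card, Fintype.card_fin]
  obtain ⟨b, hb_sub, hb_span, hb_ind⟩ := exists_linearIndependent ℂ (Set.range A.transpose)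
  rw [hspan] at hb_span
  have hbfin : b.Finite := (Set.finite_range A.transpose).subset hb_sub
  have : Fintype b := hbfin.fintype
  have hbasis : Module.Basis b ℂ (Fin l → ℂ) :=
    Module.Basis.mk hb_ind (by rw [Subtype.range_coe, hb_span])
  have hcard : Fintype.card b = l := by
    have := Module.finrank_eq_card_basis hbasis
    simpa [Module.finrank_fintype_fun_eq_card] using this.symm
  have e : Fin l ≃ b := (Fintype.equivFinOfCardEq hcard).symm
  have hchoose : ∀ i : Fin l, ∃ j : Fin k, A.transpose j = (e i : Fin l → ℂ) :=
    fun i => hb_sub (e i).2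
  choose c hc using hchoose
  refine ⟨c, ?_⟩
  have hind : LinearIndependent ℂ (fun i : Fin l => ((e i : Fin l → ℂ))) :=
    hb_ind.comp e e.injective
  have hind2 : LinearIndependent ℂ (fun i : Fin l => (A.submatrix id c).transpose i) := by
    convert hind with i
    ext r
    have := congrFun (hc i) r
    simpa using this
  have := Matrix.linearIndependent_cols_iff_isUnit.mp hind2
  exact ((Matrix.isUnit_iff_isUnit_det _).mp this).ne_zero


/-- Evaluation at `0` (the constant term), componentwise on `R^k`,
for `R = ℂ[[X_1,…,X_m]]`. -/
def evalZero (m k : ℕ) (v : Fin k → MvPowerSeries (Fin m) ℂ) : Fin k → ℂ :=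
  fun j => MvPowerSeries.constantCoeff (v j)

/-- let `R = ℂ[[X_1,…,X_m]]`, `I ⊆ R` an ideal, `E ⊆ R^k` a submodule, and
`l = dim_ℂ E(0)` where `E(0)` is the image of `E` under evaluation at `0`.  Assume `E` is
of constant rank `l` over `I`: every `(l+1) × (l+1)` minor of any matrix formed from `l+1`
elements of `E` lies in `I`.  If `v_1, …, v_l ∈ E` are such that `v_1(0), …, v_l(0)` form
a basis of `E(0)`, then every `e ∈ E` can be written as `e = a_1 v_1 + ⋯ + a_l v_l + e′`
with `a_j ∈ R` and every component of `e′` in `I`. -/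
theorem constant_rank_generation
    (m k : ℕ) (I : Ideal (MvPowerSeries (Fin m) ℂ))
    (E : Submodule (MvPowerSeries (Fin m) ℂ) (Fin k → MvPowerSeries (Fin m) ℂ))
    (l : ℕ)
    (hl : l = Module.finrank ℂ (Submodule.span ℂ (evalZero m k '' (E : Set _))))
    (hrank : ∀ w : Fin (l + 1) → (Fin k → MvPowerSeries (Fin m) ℂ),
      (∀ i, w i ∈ E) → ∀ c : Fin (l + 1) → Fin k,
        Matrix.det (fun i j => w i (c j)) ∈ I)
    (v : Fin l → (Fin k → MvPowerSeries (Fin m) ℂ)) (hv : ∀ i, v i ∈ E)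
    (hindep : LinearIndependent ℂ (fun i => evalZero m k (v i)))
    (hspan : Submodule.span ℂ (Set.range fun i => evalZero m k (v i)) =
      Submodule.span ℂ (evalZero m k '' (E : Set _))) :
    ∀ e ∈ E, ∃ a : Fin l → MvPowerSeries (Fin m) ℂ,
      ∀ j : Fin k, e j - ∑ i, a i * v i j ∈ I := by
  classical
  intro e he
  set φ : MvPowerSeries (Fin m) ℂ →+* ℂ := MvPowerSeries.constantCoeff with hφ
  obtain ⟨c, hc⟩ := exists_cols (Matrix.of fun i j => evalZero m k (v i) j) hindep
  set M : Matrix (Fin l) (Fin l) (MvPowerSeries (Fin m) ℂ) :=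
    Matrix.of (fun i j => v i (c j)) with hM
  have hdet : IsUnit M.det := by
    rw [MvPowerSeries.isUnit_iff_constantCoeff]
    have hmap : φ M.det = (M.map φ).det := RingHom.map_det φ M
    have hMmap : M.map φ = (Matrix.of fun i j => evalZero m k (v i) j).submatrix id c := by
      ext i j; rfl
    rw [show MvPowerSeries.constantCoeff M.det = φ M.det from rfl, hmap, hMmap]
    exact isUnit_iff_ne_zero.mpr hc
  have hinv : M⁻¹ * M = 1 := Matrix.nonsing_inv_mul M hdet
  set a : Fin l → MvPowerSeries (Fin m) ℂ := Matrix.vecMul (fun j => e (c j)) M⁻¹ with ha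
  have hsolve : ∀ j', ∑ i, a i * v i (c j') = e (c j') := by
    intro j'
    have h1 : Matrix.vecMul a M = fun j => e (c j) := by
      rw [ha, Matrix.vecMul_vecMul, hinv, Matrix.vecMul_one]
    have h2 := congrFun h1 j'
    rw [Matrix.vecMul, dotProduct] at h2
    simpa [hM] using h2
  set e' : Fin k → MvPowerSeries (Fin m) ℂ := fun j => e j - ∑ i, a i * v i j with he'
  have he'E : e' ∈ E := by
    have heq : e' = e - ∑ i, a i • v i := by
      funext j
      simp [he', Finset.sum_apply, smul_eq_mul]
    rw [heq]
    exact E.sub_mem he (Submodule.sum_mem _ fun i _ => E.smul_mem (a i) (hv i))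
  have hzero : ∀ j', e' (c j') = 0 := by
    intro j'; simp [he', hsolve j']
  refine ⟨a, fun j => ?_⟩
  show e' j ∈ I
  have hmem : ∀ i, (Fin.snoc v e' : Fin (l+1) → Fin k → MvPowerSeries (Fin m) ℂ) i ∈ E := by
    intro i
    refine Fin.lastCases ?_ ?_ i
    · simpa [Fin.snoc_last] using he'E
    · intro i; simpa [Fin.snoc_castSucc] using hv i
  have hD := hrank (Fin.snoc v e') hmem (Fin.snoc c j)
  have hcalc : Matrix.det (fun i j' =>
      (Fin.snoc v e' : Fin (l+1) → Fin k → MvPowerSeries (Fin m) ℂ) i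
        ((Fin.snoc c j : Fin (l+1) → Fin k) j')) = M.det * e' j := by
    rw [show Matrix.det (fun i j' =>
        (Fin.snoc v e' : Fin (l+1) → Fin k → MvPowerSeries (Fin m) ℂ) i
          ((Fin.snoc c j : Fin (l+1) → Fin k) j')) = Matrix.det (Matrix.submatrix ((fun i j' =>
        (Fin.snoc v e' : Fin (l+1) → Fin k → MvPowerSeries (Fin m) ℂ) i
          ((Fin.snoc c j : Fin (l+1) → Fin k) j')) : Matrix (Fin (l+1)) (Fin (l+1)) _)
          finSumFinEquiv finSumFinEquiv) from (Matrix.det_submatrix_equiv_self _ _).symm]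
    have hblock : (Matrix.of fun i j' =>
        (Fin.snoc v e' : Fin (l+1) → Fin k → MvPowerSeries (Fin m) ℂ) i
          ((Fin.snoc c j : Fin (l+1) → Fin k) j')).submatrix finSumFinEquiv finSumFinEquiv =
        Matrix.fromBlocks M (Matrix.of fun i _ => v i j) 0 (Matrix.of fun _ _ => e' j) := by
      refine Matrix.ext fun i j' => ?_
      have hnat : ∀ x : Fin 1, Fin.natAdd l x = Fin.last l := by
        intro x; ext; simp [Fin.val_last, Subsingleton.elim x 0]
      have hcast : ∀ i : Fin l, Fin.castAdd 1 i = Fin.castSucc i := fun _ => rfl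
      cases i with
      | inl i =>
        cases j' with
        | inl j' => simp [hcast, Fin.snoc_castSucc, hM]
        | inr j' => simp [hcast, hnat, Fin.snoc_castSucc, Fin.snoc_last]
      | inr i =>
        cases j' with
        | inl j' => simp [hcast, hnat, Fin.snoc_castSucc, Fin.snoc_last, hzero]
        | inr j' => simp [hnat, Fin.snoc_last]
    rw [show (fun i j' =>
        (Fin.snoc v e' : Fin (l+1) → Fin k → MvPowerSeries (Fin m) ℂ) i
          ((Fin.snoc c j : Fin (l+1) → Fin k) j')) =
      (Matrix.of fun i j' =>
        (Fin.snoc v e' : Fin (l+1) → Fin k → MvPowerSeries (Fin m) ℂ) i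
          ((Fin.snoc c j : Fin (l+1) → Fin k) j')) from rfl]
    rw [hblock, Matrix.det_fromBlocks_zero₂₁, Matrix.det_fin_one, Matrix.of_apply]
  rw [hcalc] at hD
  obtain ⟨u, hu⟩ := hdet
  have hrw : e' j = (↑u⁻¹ : MvPowerSeries (Fin m) ℂ) * (M.det * e' j) := by
    rw [← mul_assoc, ← hu, Units.inv_mul, one_mul]
  rw [hrw]
  exact I.mul_mem_left _ hD
end
end

section
/- Without the constant degeneracy assumption, one inequality of the preceding statement still holds: if M ⊂ ℂ^N, M′ ⊂ ℂ^{N′} are generic formal submanifolds, H : M → M′ a formal holomorphic map with degeneracy s at 0, and s̃ is the dimension of { X(0) : X a formal holomorphic vector field tangent to M′ along H(M) }, then s̃ ≤ s. -/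
noncomputable section

namespace CR

/-- Formal partial derivative `∂/∂s` of a multivariate formal power series. -/
def pd {σ : Type*} (s : σ) (f : MvPowerSeries σ ℂ) : MvPowerSeries σ ℂ :=
  fun m => ((m s : ℕ) + 1 : ℂ) * f (m + Finsupp.single s 1)

/-- Truncation bound used for substitution. -/
def bnd (σ : Type*) [Fintype σ] (n : ℕ) : σ →₀ ℕ :=
  Finsupp.equivFunOnFinite.symm (fun _ => n)

/-- Substitution of formal power series (the composition `f ∘ g`, computed
coefficientwise via truncation; it is the correct composition whenever each `g v` has
zero constant term). -/
def subst {σ σ' : Type*} [Fintype σ'] [DecidableEq σ']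
    (g : σ' → MvPowerSeries σ ℂ) (f : MvPowerSeries σ' ℂ) : MvPowerSeries σ ℂ :=
  fun m => MvPowerSeries.coeff (R := ℂ) m
    (MvPolynomial.aeval g (MvPowerSeries.trunc ℂ (bnd σ' (m.sum fun _ v => v) + bnd σ' 1) f))

/-- Conjugation of a formal power series in the doubled variables `(Z, ζ)` : conjugate the
coefficients and swap the two blocks of variables (`Z ↔ ζ`). -/
def bar {σ0 : Type*} (f : MvPowerSeries (σ0 ⊕ σ0) ℂ) : MvPowerSeries (σ0 ⊕ σ0) ℂ :=
  fun m => starRingEnd ℂ (f (Finsupp.mapDomain Sum.swap m))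

/-- The ring of formal power series `ℂ[[Z,ζ]]` in `2N` variables. -/
abbrev FPS (N : ℕ) := MvPowerSeries (Fin N ⊕ Fin N) ℂ

/-- A series is holomorphic (formal series in `Z` alone) if all `ζ`-derivatives vanish. -/
def Holo {N : ℕ} (f : FPS N) : Prop := ∀ i : Fin N, pd (Sum.inr i) f = 0

/-- Application of the formal `(0,1)` vector field `Σ_j b_j ∂/∂ζ_j`. -/
def applyCR {N : ℕ} (b : Fin N → FPS N) (f : FPS N) : FPS N :=
  ∑ j, b j * pd (Sum.inr j) f

/-- A formal `(0,1)` vector field is a CR vector field tangent to the formal manifold with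
ideal `I` if it maps `I` into `I`. -/
def TangentCR {N : ℕ} (I : Ideal (FPS N)) (b : Fin N → FPS N) : Prop :=
  ∀ f ∈ I, applyCR b f ∈ I

/-- The substitution data `(H(Z), H̄(ζ))` associated to a formal holomorphic map `H`. -/
def Hmap {N N' : ℕ} (H : Fin N' → FPS N) : (Fin N' ⊕ Fin N') → FPS N :=
  Sum.elim H (fun j => bar (H j))

/-- `H` maps the formal manifold with ideal `I` into the one with ideal `I'`. -/
def MapsInto {N N' : ℕ} (I : Ideal (FPS N)) (I' : Ideal (FPS N')) (H : Fin N' → FPS N) :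
    Prop :=
  ∀ f ∈ I', subst (Hmap H) f ∈ I

/-- Componentwise evaluation at `0`. -/
def ev0 {N k : ℕ} (v : Fin k → FPS N) : Fin k → ℂ :=
  fun j => MvPowerSeries.constantCoeff (σ := Fin N ⊕ Fin N) (R := ℂ) (v j)

/-- The generating sets of the modules `E_k`: CR-derivatives of order `≤ k` of the
pulled-back complex gradients `ρ′_{j,Z′}(H(Z), H̄(ζ))`. -/
def gradSets {N N' d' : ℕ} (I : Ideal (FPS N)) (H : Fin N' → FPS N)
    (ρ' : Fin d' → FPS N') : ℕ → Set (Fin N' → FPS N)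
  | 0 => Set.range fun j => fun k => subst (Hmap H) (pd (Sum.inl k) (ρ' j))
  | k + 1 => gradSets I H ρ' k ∪
      {v | ∃ b : Fin N → FPS N, TangentCR I b ∧
        ∃ w ∈ gradSets I H ρ' k, v = fun j => applyCR b (w j)}

/-- The identity map of `ℂ^N` as a formal holomorphic map. -/
def idMap (N : ℕ) : Fin N → FPS N := fun j => MvPowerSeries.X (Sum.inl j)

/-- `E_k(0)` : the span of the values at `0`. -/
def Ek0 {N N' d' : ℕ} (I : Ideal (FPS N)) (H : Fin N' → FPS N) (ρ' : Fin d' → FPS N')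
    (k : ℕ) : Submodule ℂ (Fin N' → ℂ) :=
  Submodule.span ℂ (ev0 '' gradSets I H ρ' k)

/-- The stable value `E(0) = ⋃_k E_k(0)`. -/
def E0 {N N' d' : ℕ} (I : Ideal (FPS N)) (H : Fin N' → FPS N) (ρ' : Fin d' → FPS N') :
    Submodule ℂ (Fin N' → ℂ) :=
  Submodule.span ℂ (ev0 '' ⋃ k, gradSets I H ρ' k)

end CR

namespace CR

variable {σ : Type*}

lemma coeff_pd (s : σ) (f : MvPowerSeries σ ℂ) (m : σ →₀ ℕ) :
    MvPowerSeries.coeff m (pd s f) =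
      ((m s : ℕ) + 1 : ℂ) * MvPowerSeries.coeff (m + Finsupp.single s 1) f := rfl

lemma pd_zero (s : σ) : pd s (0 : MvPowerSeries σ ℂ) = 0 := by
  ext m
  rw [coeff_pd]
  simp

lemma pd_add (s : σ) (f g : MvPowerSeries σ ℂ) : pd s (f + g) = pd s f + pd s g := by
  ext m
  rw [map_add, coeff_pd, coeff_pd, coeff_pd, map_add]
  ring

lemma pd_sum {ι : Type*} (s : σ) (t : Finset ι) (f : ι → MvPowerSeries σ ℂ) :
    pd s (∑ j ∈ t, f j) = ∑ j ∈ t, pd s (f j) := by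
  classical
  induction t using Finset.induction with
  | empty => simp [pd_zero]
  | insert _ _ h ih => rw [Finset.sum_insert h, Finset.sum_insert h, pd_add, ih]

lemma sum_shift [DecidableEq σ] (s : σ) (m : σ →₀ ℕ) (F : (σ →₀ ℕ) → (σ →₀ ℕ) → ℂ) :
    Finset.sum (Finset.HasAntidiagonal.antidiagonal (m + Finsupp.single s 1))
        (fun p : (σ →₀ ℕ) × (σ →₀ ℕ) => ((p.1 s : ℕ) : ℂ) * F p.1 p.2)
      = Finset.sum (Finset.HasAntidiagonal.antidiagonal m)
        (fun p : (σ →₀ ℕ) × (σ →₀ ℕ) =>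
          (((p.1 s : ℕ) : ℂ) + 1) * F (p.1 + Finsupp.single s 1) p.2) := by
  classical
  rw [← Finset.sum_filter_of_ne (p := fun p : (σ →₀ ℕ) × (σ →₀ ℕ) => p.1 s ≠ 0)
    (fun p _ h hps => h (by rw [hps]; simp))]
  refine Finset.sum_nbij' (fun p => (p.1 - Finsupp.single s 1, p.2))
    (fun p => (p.1 + Finsupp.single s 1, p.2)) ?_ ?_ ?_ ?_ ?_
  · rintro ⟨u, v⟩ hp
    simp only [Finset.mem_filter, Finset.HasAntidiagonal.mem_antidiagonal] at hp ⊢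
    obtain ⟨hp, hs⟩ := hp
    have hle : Finsupp.single s 1 ≤ u :=
      Finsupp.single_le_iff.mpr (Nat.one_le_iff_ne_zero.mpr hs)
    have h2 : (u - Finsupp.single s 1 + v) + Finsupp.single s 1 = m + Finsupp.single s 1 := by
      rw [add_right_comm, tsub_add_cancel_of_le hle, hp]
    exact add_right_cancel h2
  · rintro ⟨u, v⟩ hp
    simp only [Finset.HasAntidiagonal.mem_antidiagonal] at hp
    simp only [Finset.mem_filter, Finset.HasAntidiagonal.mem_antidiagonal]
    constructor
    · rw [add_right_comm, hp]
    · simp [Finsupp.add_apply, Finsupp.single_eq_same]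
  · rintro ⟨u, v⟩ hp
    simp only [Finset.mem_filter, Finset.HasAntidiagonal.mem_antidiagonal] at hp
    have hle : Finsupp.single s 1 ≤ u :=
      Finsupp.single_le_iff.mpr (Nat.one_le_iff_ne_zero.mpr hp.2)
    exact Prod.ext (tsub_add_cancel_of_le hle) rfl
  · rintro ⟨u, v⟩ _
    exact Prod.ext (add_tsub_cancel_right _ _) rfl
  · rintro ⟨u, v⟩ hp
    simp only [Finset.mem_filter, Finset.HasAntidiagonal.mem_antidiagonal] at hp
    have hle : Finsupp.single s 1 ≤ u :=
      Finsupp.single_le_iff.mpr (Nat.one_le_iff_ne_zero.mpr hp.2)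
    show ((u s : ℕ) : ℂ) * F u v
        = ((((u - Finsupp.single s 1 : σ →₀ ℕ) s : ℕ) : ℂ) + 1)
          * F ((u - Finsupp.single s 1) + Finsupp.single s 1) v
    rw [tsub_add_cancel_of_le hle]
    congr 1
    have h1 : (u - Finsupp.single s 1 : σ →₀ ℕ) s = u s - 1 := by
      rw [Finsupp.tsub_apply, Finsupp.single_eq_same]
    rw [h1]
    have h2 : u s - 1 + 1 = u s := Nat.succ_pred_eq_of_pos (Nat.pos_of_ne_zero hp.2)
    exact_mod_cast (congrArg (fun n : ℕ => (n : ℂ)) h2).symm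

lemma pd_mul [DecidableEq σ] (s : σ) (f g : MvPowerSeries σ ℂ) :
    pd s (f * g) = pd s f * g + f * pd s g := by
  ext m
  rw [map_add, coeff_pd, MvPowerSeries.coeff_mul, MvPowerSeries.coeff_mul,
    MvPowerSeries.coeff_mul, Finset.mul_sum]
  simp only [coeff_pd]
  simp only [MvPowerSeries.coeff_apply]
  have step1 : Finset.sum (Finset.HasAntidiagonal.antidiagonal (m + Finsupp.single s 1))
      (fun p : (σ →₀ ℕ) × (σ →₀ ℕ) => ((m s : ℕ) + 1 : ℂ) * (f p.1 * g p.2))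
      = Finset.sum (Finset.HasAntidiagonal.antidiagonal (m + Finsupp.single s 1))
        (fun p : (σ →₀ ℕ) × (σ →₀ ℕ) =>
          ((p.1 s : ℕ) : ℂ) * (f p.1 * g p.2) + ((p.2 s : ℕ) : ℂ) * (f p.1 * g p.2)) := by
    refine Finset.sum_congr rfl fun p hp => ?_
    rw [Finset.HasAntidiagonal.mem_antidiagonal] at hp
    have h3 : p.1 s + p.2 s = m s + 1 := by
      have h4 := DFunLike.congr_fun hp s
      simpa [Finsupp.add_apply, Finsupp.single_eq_same] using h4
    rw [← add_mul]
    congr 1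
    exact_mod_cast (congrArg (fun n : ℕ => (n : ℂ)) h3).symm
  rw [step1, Finset.sum_add_distrib]
  have hA : Finset.sum (Finset.HasAntidiagonal.antidiagonal (m + Finsupp.single s 1))
      (fun p : (σ →₀ ℕ) × (σ →₀ ℕ) => ((p.1 s : ℕ) : ℂ) * (f p.1 * g p.2))
      = Finset.sum (Finset.HasAntidiagonal.antidiagonal m)
        (fun p : (σ →₀ ℕ) × (σ →₀ ℕ) =>
          (((p.1 s : ℕ) : ℂ) + 1) * (f (p.1 + Finsupp.single s 1) * g p.2)) :=
    sum_shift s m fun u v => f u * g v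
  have hB : Finset.sum (Finset.HasAntidiagonal.antidiagonal (m + Finsupp.single s 1))
      (fun p : (σ →₀ ℕ) × (σ →₀ ℕ) => ((p.2 s : ℕ) : ℂ) * (f p.1 * g p.2))
      = Finset.sum (Finset.HasAntidiagonal.antidiagonal m)
        (fun p : (σ →₀ ℕ) × (σ →₀ ℕ) =>
          (((p.2 s : ℕ) : ℂ) + 1) * (f p.1 * g (p.2 + Finsupp.single s 1))) := by
    have hs1 := Finsupp.sum_antidiagonal_swap (m + Finsupp.single s 1)
      (fun u v : σ →₀ ℕ => ((v s : ℕ) : ℂ) * (f u * g v))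
    have hs2 := Finsupp.sum_antidiagonal_swap m
      (fun u v : σ →₀ ℕ => (((u s : ℕ) : ℂ) + 1) * (f v * g (u + Finsupp.single s 1)))
    calc _ = Finset.sum (Finset.HasAntidiagonal.antidiagonal (m + Finsupp.single s 1))
            (fun p : (σ →₀ ℕ) × (σ →₀ ℕ) => ((p.1 s : ℕ) : ℂ) * (f p.2 * g p.1)) := hs1
      _ = Finset.sum (Finset.HasAntidiagonal.antidiagonal m)
            (fun p : (σ →₀ ℕ) × (σ →₀ ℕ) =>
              (((p.1 s : ℕ) : ℂ) + 1) * (f p.2 * g (p.1 + Finsupp.single s 1))) :=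
        sum_shift s m fun u v => f v * g u
      _ = _ := hs2
  rw [hA, hB]
  congr 1 <;> exact Finset.sum_congr rfl fun p _ => by ring

end CR

open CR in
/-- without any constant degeneracy assumption, if `H : M → M′` is a formal
holomorphic map with degeneracy `s` at `0` (i.e. `dim_ℂ E(0) + s = N′`), and `stilde` is the
dimension of `{ X(0) : X a formal holomorphic vector field tangent to M′ along H(M) }`,
then `stilde ≤ s`. -/
theorem dim_tangent_holomorphic_fields_le_degeneracy
    (N N' d d' : ℕ)
    (ρ : Fin d → FPS N) (ρ' : Fin d' → FPS N')
    (I : Ideal (FPS N)) (I' : Ideal (FPS N'))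
    (hI : I = Ideal.span (Set.range ρ)) (hI' : I' = Ideal.span (Set.range ρ'))
    (hρ0 : ∀ i, MvPowerSeries.constantCoeff (R := ℂ) (ρ i) = 0)
    (hρ'0 : ∀ j, MvPowerSeries.constantCoeff (R := ℂ) (ρ' j) = 0)
    (hreal : ∀ i, bar (ρ i) ∈ I) (hreal' : ∀ j, bar (ρ' j) ∈ I')
    (hgen : LinearIndependent ℂ (fun i (j : Fin N) =>
      MvPowerSeries.constantCoeff (R := ℂ) (pd (Sum.inl j) (ρ i))))
    (hgen' : LinearIndependent ℂ (fun i (j : Fin N') =>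
      MvPowerSeries.constantCoeff (R := ℂ) (pd (Sum.inl j) (ρ' i))))
    (H : Fin N' → FPS N) (hHol : ∀ j, Holo (H j))
    (hH0 : ∀ j, MvPowerSeries.constantCoeff (R := ℂ) (H j) = 0)
    (hmap : MapsInto I I' H)
    -- the degeneracy s of H at 0
    (s : ℕ) (hsdim : Module.finrank ℂ (E0 I H ρ') + s = N')
    -- stilde, the dimension of the space of values at 0 of formal holomorphic vector fields
    -- tangent to M′ along H(M)
    (stilde : ℕ) (hstilde : stilde = Module.finrank ℂ (Submodule.span ℂ
      {x : Fin N' → ℂ | ∃ a : Fin N' → FPS N,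
        (∀ j, Holo (a j)) ∧
        (∀ φ ∈ I', (∑ j, a j * subst (Hmap H) (pd (Sum.inl j) φ)) ∈ I) ∧
        (∀ j, MvPowerSeries.constantCoeff (R := ℂ) (a j) = x j)})) :
    stilde ≤ s := by
  classical
  -- Step 1: every element of I has zero constant coefficient.
  have hI0 : ∀ f ∈ I, MvPowerSeries.constantCoeff (R := ℂ) f = 0 := by
    intro f hf
    rw [hI] at hf
    obtain ⟨c, rfl⟩ := Ideal.mem_span_range_iff_exists_fun.mp hf
    rw [map_sum]
    simp [map_mul, hρ0]
  -- Step 2: key lemma: the pairing of a tangent field with any gradSets element lies in I.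
  have hkey : ∀ (a : Fin N' → FPS N), (∀ j, Holo (a j)) →
      (∀ φ ∈ I', (∑ j, a j * subst (Hmap H) (pd (Sum.inl j) φ)) ∈ I) →
      ∀ k (w : Fin N' → FPS N), w ∈ gradSets I H ρ' k → (∑ j, a j * w j) ∈ I := by
    intro a ha1 ha2 k
    induction k with
    | zero =>
      intro w hw
      simp only [gradSets] at hw
      obtain ⟨l, rfl⟩ := hw
      simpa using ha2 (ρ' l) (by rw [hI']; exact Ideal.subset_span ⟨l, rfl⟩)
    | succ k ih =>
      intro w hw
      simp only [gradSets] at hw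
      rcases hw with hw | ⟨b, hb, w0, hw0, rfl⟩
      · exact ih w hw
      · have hg := hb _ (ih w0 hw0)
        have hcomm : applyCR b (∑ j, a j * w0 j) = ∑ j, a j * applyCR b (w0 j) := by
          show (∑ i, b i * pd (Sum.inr i) (∑ j, a j * w0 j)) = _
          calc ∑ i, b i * pd (Sum.inr i) (∑ j, a j * w0 j)
              = ∑ i, ∑ j, b i * (a j * pd (Sum.inr i) (w0 j)) := by
                refine Finset.sum_congr rfl fun i _ => ?_
                rw [pd_sum, Finset.mul_sum]
                refine Finset.sum_congr rfl fun j _ => ?_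
                rw [pd_mul, ha1 j i, zero_mul, zero_add]
            _ = ∑ j, a j * applyCR b (w0 j) := by
                rw [Finset.sum_comm]
                refine Finset.sum_congr rfl fun j _ => ?_
                rw [applyCR, Finset.mul_sum]
                refine Finset.sum_congr rfl fun i _ => ?_
                ring
        rwa [hcomm] at hg
  -- Step 3: perpendicularity of the generating sets.
  set Sset : Set (Fin N' → ℂ) :=
    {x : Fin N' → ℂ | ∃ a : Fin N' → FPS N,
      (∀ j, Holo (a j)) ∧
      (∀ φ ∈ I', (∑ j, a j * subst (Hmap H) (pd (Sum.inl j) φ)) ∈ I) ∧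
      (∀ j, MvPowerSeries.constantCoeff (R := ℂ) (a j) = x j)} with hSset
  have hperp : ∀ x ∈ Sset, ∀ k, ∀ w ∈ gradSets I H ρ' k,
      ∑ j, x j * ev0 w j = 0 := by
    rintro x ⟨a, ha1, ha2, ha3⟩ k w hw
    have h0 := hI0 _ (hkey a ha1 ha2 k w hw)
    rw [map_sum] at h0
    simp only [map_mul, ha3] at h0
    exact h0
  -- Step 4: linear algebra.
  let Φ : (Fin N' → ℂ) →ₗ[ℂ] Module.Dual ℂ (Fin N' → ℂ) :=
    ∑ j : Fin N', (LinearMap.proj j).smulRight (LinearMap.proj j)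
  have hΦ : ∀ x y : Fin N' → ℂ, Φ x y = ∑ j, x j * y j := by
    intro x y
    simp [Φ, LinearMap.sum_apply, LinearMap.smulRight_apply, LinearMap.proj_apply,
      smul_eq_mul]
  have hΦinj : Function.Injective Φ := by
    intro x y hxy
    funext j
    have h1 := LinearMap.congr_fun hxy (Pi.single j 1)
    rw [hΦ, hΦ] at h1
    simpa [Pi.single_apply, mul_ite, mul_one, mul_zero] using h1
  set T : Submodule ℂ (Fin N' → ℂ) := Submodule.span ℂ Sset with hT
  have hTle : Submodule.map Φ T ≤ (E0 I H ρ').dualAnnihilator := by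
    rw [hT, Submodule.map_span, Submodule.span_le]
    rintro _ ⟨x, hx, rfl⟩
    rw [SetLike.mem_coe, Submodule.mem_dualAnnihilator]
    intro y hy
    have hEker : E0 I H ρ' ≤ LinearMap.ker (Φ x) := by
      rw [E0, Submodule.span_le]
      rintro _ ⟨w, hw, rfl⟩
      obtain ⟨k, hk⟩ := Set.mem_iUnion.mp hw
      rw [SetLike.mem_coe, LinearMap.mem_ker, hΦ]
      exact hperp x hx k w hk
    exact hEker hy
  have hr1 : Module.finrank ℂ T = Module.finrank ℂ (Submodule.map Φ T) :=
    (Submodule.equivMapOfInjective Φ hΦinj T).finrank_eq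
  have hr2 : Module.finrank ℂ (Submodule.map Φ T)
      ≤ Module.finrank ℂ ((E0 I H ρ').dualAnnihilator) :=
    Submodule.finrank_mono hTle
  have hr3 : Module.finrank ℂ ((Fin N' → ℂ) ⧸ E0 I H ρ')
      = Module.finrank ℂ ((E0 I H ρ').dualAnnihilator) :=
    (Subspace.quotEquivAnnihilator (E0 I H ρ')).finrank_eq
  have hr4 := Submodule.finrank_quotient_add_finrank (E0 I H ρ')
  have hrV : Module.finrank ℂ (Fin N' → ℂ) = N' := by
    simp [Module.finrank_pi]
  rw [hstilde]
  omega
end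
end
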